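/- Every counter system whose step relation 𝒯 consists exactly of the lossy broadcast steps induced by a finite set of lossy broadcast transitions is fully ≼₀-compatible. -/
import Mathlib


namespace CS01

variable {C Q A : Type*}

/-- Configurations of a counter system: a controller state and a counter vector. -/
abbrev Conf (C Q : Type*) := C × (Q → ℕ)

/-- The order `≼₀`: same controller state, pointwise smaller counters,
and the same zero pattern. -/
def Le0 (x y : Conf C Q) : Prop :=
  x.1 = y.1 ∧ (∀ q, x.2 q ≤ y.2 q) ∧ ∀ q, (x.2 q = 0 ↔ y.2 q = 0)

/-- The product order `≼₀ × ≼₀` on pairs of configurations. -/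
def ProdLe0 (s t : Conf C Q × Conf C Q) : Prop :=
  Le0 s.1 t.1 ∧ Le0 s.2 t.2

/-- The abstraction `α`, mapping a configuration to its 01-abstraction. -/
def alpha (x : Conf C Q) : Conf C Q :=
  (x.1, fun q => if x.2 q = 0 then 0 else 1)

/-- Forward `≼₀`-compatibility of a step relation. -/
def FwdCompat (T : Set (Conf C Q × Conf C Q)) : Prop :=
  ∀ x y d, (x, y) ∈ T → Le0 x d → ∃ d', (d, d') ∈ T ∧ Le0 y d'

/-- Backward `≼₀`-compatibility of a step relation. -/
def BwdCompat (T : Set (Conf C Q × Conf C Q)) : Prop :=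
  ∀ x y d', (x, y) ∈ T → Le0 y d' → ∃ d, (d, d') ∈ T ∧ Le0 x d

/-- Steps of a counter system are size-preserving. -/
def SizePreserving [Fintype Q] (T : Set (Conf C Q × Conf C Q)) : Prop :=
  ∀ t ∈ T, ∑ q, t.1.2 q = ∑ q, t.2.2 q

/-- A step of the 01-counter system `𝒞_α`. -/
def AbsStep (T : Set (Conf C Q × Conf C Q)) (x' y' : Conf C Q) : Prop :=
  ∃ t ∈ T, alpha t.1 = x' ∧ alpha t.2 = y'

/-- A finite run of the counter system, starting in an initial configuration. -/
def IsRun (T : Set (Conf C Q × Conf C Q)) (c0 : C) (Q0 : Set Q)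
    {n : ℕ} (ρ : Fin (n + 1) → Conf C Q) : Prop :=
  (ρ 0).1 = c0 ∧ (∀ q ∉ Q0, (ρ 0).2 q = 0) ∧
    ∀ i : Fin n, (ρ i.castSucc, ρ i.succ) ∈ T

/-- A finite run of the 01-counter system, starting in an initial (0/1-valued)
abstract configuration. -/
def IsAbsRun (T : Set (Conf C Q × Conf C Q)) (c0 : C) (Q0 : Set Q)
    {n : ℕ} (σ : Fin (n + 1) → Conf C Q) : Prop :=
  (σ 0).1 = c0 ∧ (∀ q, (σ 0).2 q ≤ 1) ∧ (∀ q ∉ Q0, (σ 0).2 q = 0) ∧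
    ∀ i : Fin n, AbsStep T (σ i.castSucc) (σ i.succ)

/-- Reachability in the counter system. -/
def Reach (T : Set (Conf C Q × Conf C Q)) (c0 : C) (Q0 : Set Q)
    (x : Conf C Q) : Prop :=
  ∃ (n : ℕ) (ρ : Fin (n + 1) → Conf C Q), IsRun T c0 Q0 ρ ∧ ρ (Fin.last n) = x

/-- Reachability in the 01-counter system. -/
def AbsReach (T : Set (Conf C Q × Conf C Q)) (c0 : C) (Q0 : Set Q)
    (x : Conf C Q) : Prop :=
  ∃ (n : ℕ) (σ : Fin (n + 1) → Conf C Q), IsAbsRun T c0 Q0 σ ∧ σ (Fin.last n) = x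

/-- The counter vector obtained when `i` processes move from `p` to `p'`. -/
def moveN [DecidableEq Q] (v : Q → ℕ) (p p' : Q) (i : ℕ) : Q → ℕ :=
  fun q => v q - (if q = p then i else 0) + (if q = p' then i else 0)

/-- Labels of lossy broadcast transitions: broadcast `!a` or receive `?a`. -/
inductive LBLab (A : Type*) where
  | br : A → LBLab A
  | rcv : A → LBLab A

/-- Number of transitions in the multiset `M` with source `q`. -/
def srcCount [DecidableEq Q] (M : Multiset (Q × Q)) (q : Q) : ℕ :=
  (M.map Prod.fst).count q

/-- Number of transitions in the multiset `M` with target `q`. -/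
def tgtCount [DecidableEq Q] (M : Multiset (Q × Q)) (q : Q) : ℕ :=
  (M.map Prod.snd).count q

/-- A lossy broadcast step induced by controller transitions `ΔC` and
user transitions `ΔQ`: one broadcast transition on some letter `a` is taken by
`j ≥ 1` processes, and an arbitrary multiset of receive transitions on `a` is
taken, each by one process; the controller takes at most one of the transitions. -/
def LBStep [DecidableEq Q] (ΔC : Set (C × LBLab A × C)) (ΔQ : Set (Q × LBLab A × Q))
    (x y : Conf C Q) : Prop :=
  ∃ (a : A) (Mb Mr : Multiset (Q × Q)),
    (∀ t ∈ Mb, (t.1, LBLab.br a, t.2) ∈ ΔQ) ∧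
    (∀ t ∈ Mr, (t.1, LBLab.rcv a, t.2) ∈ ΔQ) ∧
    -- the unique broadcast transition is taken either by the controller
    -- (and then no user broadcasts), or by j ≥ 1 user processes (and then the
    -- controller either takes a receive transition or does not move)
    (((x.1, LBLab.br a, y.1) ∈ ΔC ∧ Mb = 0) ∨
      ((∃ p0 p0' j, 1 ≤ j ∧ (p0, LBLab.br a, p0') ∈ ΔQ ∧
          Mb = Multiset.replicate j (p0, p0')) ∧
        ((x.1, LBLab.rcv a, y.1) ∈ ΔC ∨ y.1 = x.1))) ∧
    (∀ q, srcCount (Mb + Mr) q ≤ x.2 q) ∧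
    ∀ q, y.2 q = x.2 q - srcCount (Mb + Mr) q + tgtCount (Mb + Mr) q

section Aux

variable [DecidableEq Q]

lemma srcCount_add' (M N : Multiset (Q × Q)) (q : Q) :
    srcCount (M + N) q = srcCount M q + srcCount N q := by
  simp [srcCount]

lemma tgtCount_add' (M N : Multiset (Q × Q)) (q : Q) :
    tgtCount (M + N) q = tgtCount M q + tgtCount N q := by
  simp [tgtCount]

lemma srcCount_sum' {ι : Type*} (s : Finset ι) (f : ι → Multiset (Q × Q)) (q : Q) :
    srcCount (∑ i ∈ s, f i) q = ∑ i ∈ s, srcCount (f i) q := by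
  classical
  induction s using Finset.cons_induction with
  | empty => simp [srcCount]
  | cons a s ha ih => rw [Finset.sum_cons, Finset.sum_cons, srcCount_add', ih]

lemma tgtCount_sum' {ι : Type*} (s : Finset ι) (f : ι → Multiset (Q × Q)) (q : Q) :
    tgtCount (∑ i ∈ s, f i) q = ∑ i ∈ s, tgtCount (f i) q := by
  classical
  induction s using Finset.cons_induction with
  | empty => simp [tgtCount]
  | cons a s ha ih => rw [Finset.sum_cons, Finset.sum_cons, tgtCount_add', ih]

lemma srcCount_replicate' (n : ℕ) (t : Q × Q) (q : Q) :
    srcCount (Multiset.replicate n t) q = if t.1 = q then n else 0 := by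
  simp [srcCount, Multiset.map_replicate, Multiset.count_replicate]

lemma tgtCount_replicate' (n : ℕ) (t : Q × Q) (q : Q) :
    tgtCount (Multiset.replicate n t) q = if t.2 = q then n else 0 := by
  simp [tgtCount, Multiset.map_replicate, Multiset.count_replicate]

lemma exists_src_of_ne_zero {M : Multiset (Q × Q)} {q : Q} (h : srcCount M q ≠ 0) :
    ∃ t ∈ M, t.1 = q := by
  have : q ∈ M.map Prod.fst := Multiset.count_pos.mp (Nat.pos_of_ne_zero h)
  exact Multiset.mem_map.mp this

lemma exists_tgt_of_ne_zero {M : Multiset (Q × Q)} {q : Q} (h : tgtCount M q ≠ 0) :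
    ∃ t ∈ M, t.2 = q := by
  have : q ∈ M.map Prod.snd := Multiset.count_pos.mp (Nat.pos_of_ne_zero h)
  exact Multiset.mem_map.mp this

lemma srcCount_ne_zero_of_mem {M : Multiset (Q × Q)} {t : Q × Q} {q : Q}
    (h : t ∈ M) (h2 : t.1 = q) : srcCount M q ≠ 0 := by
  have : 0 < Multiset.count q (M.map Prod.fst) :=
    Multiset.count_pos.mpr (Multiset.mem_map.mpr ⟨t, h, h2⟩)
  simp only [srcCount]
  omega

lemma tgtCount_ne_zero_of_mem {M : Multiset (Q × Q)} {t : Q × Q} {q : Q}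
    (h : t ∈ M) (h2 : t.2 = q) : tgtCount M q ≠ 0 := by
  have : 0 < Multiset.count q (M.map Prod.snd) :=
    Multiset.count_pos.mpr (Multiset.mem_map.mpr ⟨t, h, h2⟩)
  simp only [tgtCount]
  omega

lemma fwd_lemma {C Q A : Type*} [Fintype Q] [DecidableEq Q]
    (ΔC : Set (C × LBLab A × C)) (ΔQ : Set (Q × LBLab A × Q))
    {x y d : Conf C Q} (hxy : LBStep ΔC ΔQ x y) (hxd : Le0 x d) :
    ∃ d', LBStep ΔC ΔQ d d' ∧ Le0 y d' := by
  classical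
  obtain ⟨a, Mb, Mr, hMb, hMr, hbr, hs, hst⟩ := hxy
  obtain ⟨hc, hle, hz⟩ := hxd
  obtain ⟨e, he1, he0⟩ : ∃ e : Q → ℕ,
      (∀ q, y.2 q = 0 → e q = d.2 q - x.2 q) ∧ (∀ q, y.2 q ≠ 0 → e q = 0) :=
    ⟨fun q => if y.2 q = 0 then d.2 q - x.2 q else 0,
      fun q h => by simp [h], fun q h => by simp [h]⟩
  have claimB : ∀ q, y.2 q = 0 →
      srcCount (Mb + Mr) q = x.2 q ∧ tgtCount (Mb + Mr) q = 0 := by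
    intro q hy
    have h1 := hs q
    have h2 := hst q
    omega
  have hex : ∀ q, ∃ tr : Q × Q, e q ≠ 0 → tr ∈ Mb + Mr ∧ tr.1 = q := by
    intro q
    by_cases h : e q = 0
    · exact ⟨(q, q), fun hh => (hh h).elim⟩
    · have hy : y.2 q = 0 := by
        by_contra hy; exact h (he0 q hy)
      have hsq : srcCount (Mb + Mr) q ≠ 0 := by
        have hcb := (claimB q hy).1
        have hxq : x.2 q ≠ 0 := by
          intro hx0
          have hd0 : d.2 q = 0 := (hz q).mp hx0
          have := he1 q hy
          omega
        omega
      obtain ⟨tr, htr, h1⟩ := exists_src_of_ne_zero hsq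
      exact ⟨tr, fun _ => ⟨htr, h1⟩⟩
  choose τ hτ using hex
  set Eb : Multiset (Q × Q) :=
    ∑ q : Q, if τ q ∈ Mb then Multiset.replicate (e q) (τ q) else 0 with hEb
  set Er : Multiset (Q × Q) :=
    ∑ q : Q, if τ q ∈ Mb then 0 else Multiset.replicate (e q) (τ q) with hEr
  set E : Multiset (Q × Q) := ∑ q : Q, Multiset.replicate (e q) (τ q) with hE
  have hEbEr : Eb + Er = E := by
    rw [hEb, hEr, hE, ← Finset.sum_add_distrib]
    exact Finset.sum_congr rfl fun q _ => by split_ifs <;> simp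
  have hEbsub : ∀ tr ∈ Eb, tr ∈ Mb := by
    intro tr htr
    rw [hEb, Multiset.mem_sum] at htr
    obtain ⟨q, -, hq⟩ := htr
    split_ifs at hq with h
    · exact (Multiset.eq_of_mem_replicate hq) ▸ h
    · simp at hq
  have hErsub : ∀ tr ∈ Er, tr ∈ Mr := by
    intro tr htr
    rw [hEr, Multiset.mem_sum] at htr
    obtain ⟨q, -, hq⟩ := htr
    split_ifs at hq with h
    · simp at hq
    · obtain ⟨hne, rfl⟩ := Multiset.mem_replicate.mp hq
      rcases Multiset.mem_add.mp (hτ q hne).1 with hm | hm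
      · exact absurd hm h
      · exact hm
  have hsrcE : ∀ q, srcCount E q = e q := by
    intro q
    rw [hE, srcCount_sum']
    rw [Finset.sum_eq_single q]
    · rw [srcCount_replicate']
      by_cases h : e q = 0
      · simp [h]
      · rw [if_pos (hτ q h).2]
    · intro r _ hr
      rw [srcCount_replicate']
      by_cases h : e r = 0
      · simp [h]
      · rw [if_neg]
        intro hcon
        exact hr ((hτ r h).2 ▸ hcon)
    · intro h
      exact absurd (Finset.mem_univ q) h
  have htgtE0 : ∀ q, y.2 q = 0 → tgtCount E q = 0 := by
    intro q hy
    rw [hE, tgtCount_sum']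
    apply Finset.sum_eq_zero
    intro r _
    rw [tgtCount_replicate']
    by_cases h : e r = 0
    · simp [h]
    · rw [if_neg]
      intro hcon
      exact tgtCount_ne_zero_of_mem (hτ r h).1 hcon (claimB q hy).2
  have hM' : Mb + Eb + (Mr + Er) = (Mb + Mr) + E := by
    rw [add_add_add_comm, hEbEr]
  refine ⟨(y.1, fun q => d.2 q - (srcCount (Mb + Mr) q + e q) +
      (tgtCount (Mb + Mr) q + tgtCount E q)), ?_, ?_⟩
  · refine ⟨a, Mb + Eb, Mr + Er, ?_, ?_, ?_, ?_, ?_⟩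
    · intro t ht
      rcases Multiset.mem_add.mp ht with h | h
      · exact hMb t h
      · exact hMb t (hEbsub t h)
    · intro t ht
      rcases Multiset.mem_add.mp ht with h | h
      · exact hMr t h
      · exact hMr t (hErsub t h)
    · rcases hbr with ⟨hC, hMb0⟩ | ⟨⟨p0, p0', j, hj, hp, hrep⟩, hctl⟩
      · left
        have hEb0 : Eb = 0 := Multiset.eq_zero_of_forall_notMem fun t ht => by
          have := hEbsub t ht; rw [hMb0] at this; simp at this
        refine ⟨?_, by rw [hMb0, hEb0]; rfl⟩
        show (d.1, LBLab.br a, y.1) ∈ ΔC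
        rw [← hc]; exact hC
      · right
        have hall : ∀ b ∈ Mb + Eb, b = (p0, p0') := by
          intro b hb
          rcases Multiset.mem_add.mp hb with h | h
          · exact Multiset.eq_of_mem_replicate (hrep ▸ h)
          · exact Multiset.eq_of_mem_replicate (hrep ▸ hEbsub b h)
        refine ⟨⟨p0, p0', Multiset.card (Mb + Eb), ?_, hp,
          Multiset.eq_replicate_card.mpr hall⟩, ?_⟩
        · have hcard : Multiset.card Mb = j := by rw [hrep, Multiset.card_replicate]
          rw [Multiset.card_add]
          omega
        · rcases hctl with h | h
          · left
            show (d.1, LBLab.rcv a, y.1) ∈ ΔC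
            rw [← hc]; exact h
          · right
            show y.1 = d.1
            rw [← hc]; exact h
    · intro q
      rw [hM', srcCount_add', hsrcE]
      have h1 := hs q
      have h3 := hle q
      by_cases hy : y.2 q = 0
      · have hcb := (claimB q hy).1
        have hEq := he1 q hy
        omega
      · have hEq := he0 q hy
        omega
    · intro q
      show d.2 q - (srcCount (Mb + Mr) q + e q) +
          (tgtCount (Mb + Mr) q + tgtCount E q) =
        d.2 q - srcCount (Mb + Eb + (Mr + Er)) q + tgtCount (Mb + Eb + (Mr + Er)) q
      simp only [hM', srcCount_add', tgtCount_add', hsrcE]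
  · have main : ∀ q, y.2 q ≤ d.2 q - (srcCount (Mb + Mr) q + e q) +
        (tgtCount (Mb + Mr) q + tgtCount E q) ∧
        (y.2 q = 0 ↔ d.2 q - (srcCount (Mb + Mr) q + e q) +
          (tgtCount (Mb + Mr) q + tgtCount E q) = 0) := by
      intro q
      have h1 := hs q
      have h2 := hst q
      have h3 := hle q
      by_cases hy : y.2 q = 0
      · have hcb := claimB q hy
        have hEq := he1 q hy
        have htE := htgtE0 q hy
        omega
      · have hEq := he0 q hy
        omega
    exact ⟨rfl, fun q => (main q).1, fun q => (main q).2⟩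

lemma bwd_lemma {C Q A : Type*} [Fintype Q] [DecidableEq Q]
    (ΔC : Set (C × LBLab A × C)) (ΔQ : Set (Q × LBLab A × Q))
    {x y d' : Conf C Q} (hxy : LBStep ΔC ΔQ x y) (hyd : Le0 y d') :
    ∃ d, LBStep ΔC ΔQ d d' ∧ Le0 x d := by
  classical
  obtain ⟨a, Mb, Mr, hMb, hMr, hbr, hs, hst⟩ := hxy
  obtain ⟨hc, hle, hz⟩ := hyd
  obtain ⟨e, he1, he0⟩ : ∃ e : Q → ℕ,
      (∀ q, x.2 q = 0 → e q = d'.2 q - y.2 q) ∧ (∀ q, x.2 q ≠ 0 → e q = 0) :=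
    ⟨fun q => if x.2 q = 0 then d'.2 q - y.2 q else 0,
      fun q h => by simp [h], fun q h => by simp [h]⟩
  have claimB : ∀ q, x.2 q = 0 →
      srcCount (Mb + Mr) q = 0 ∧ tgtCount (Mb + Mr) q = y.2 q := by
    intro q hx
    have h1 := hs q
    have h2 := hst q
    omega
  have hex : ∀ q, ∃ tr : Q × Q, e q ≠ 0 → tr ∈ Mb + Mr ∧ tr.2 = q := by
    intro q
    by_cases h : e q = 0
    · exact ⟨(q, q), fun hh => (hh h).elim⟩
    · have hx : x.2 q = 0 := by
        by_contra hx; exact h (he0 q hx)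
      have htq : tgtCount (Mb + Mr) q ≠ 0 := by
        have hcb := (claimB q hx).2
        have hyq : y.2 q ≠ 0 := by
          intro hy0
          have hd0 : d'.2 q = 0 := (hz q).mp hy0
          have := he1 q hx
          omega
        omega
      obtain ⟨tr, htr, h1⟩ := exists_tgt_of_ne_zero htq
      exact ⟨tr, fun _ => ⟨htr, h1⟩⟩
  choose τ hτ using hex
  set Eb : Multiset (Q × Q) :=
    ∑ q : Q, if τ q ∈ Mb then Multiset.replicate (e q) (τ q) else 0 with hEb
  set Er : Multiset (Q × Q) :=
    ∑ q : Q, if τ q ∈ Mb then 0 else Multiset.replicate (e q) (τ q) with hEr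
  set E : Multiset (Q × Q) := ∑ q : Q, Multiset.replicate (e q) (τ q) with hE
  have hEbEr : Eb + Er = E := by
    rw [hEb, hEr, hE, ← Finset.sum_add_distrib]
    exact Finset.sum_congr rfl fun q _ => by split_ifs <;> simp
  have hEbsub : ∀ tr ∈ Eb, tr ∈ Mb := by
    intro tr htr
    rw [hEb, Multiset.mem_sum] at htr
    obtain ⟨q, -, hq⟩ := htr
    split_ifs at hq with h
    · exact (Multiset.eq_of_mem_replicate hq) ▸ h
    · simp at hq
  have hErsub : ∀ tr ∈ Er, tr ∈ Mr := by
    intro tr htr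
    rw [hEr, Multiset.mem_sum] at htr
    obtain ⟨q, -, hq⟩ := htr
    split_ifs at hq with h
    · simp at hq
    · obtain ⟨hne, rfl⟩ := Multiset.mem_replicate.mp hq
      rcases Multiset.mem_add.mp (hτ q hne).1 with hm | hm
      · exact absurd hm h
      · exact hm
  have htgtE : ∀ q, tgtCount E q = e q := by
    intro q
    rw [hE, tgtCount_sum']
    rw [Finset.sum_eq_single q]
    · rw [tgtCount_replicate']
      by_cases h : e q = 0
      · simp [h]
      · rw [if_pos (hτ q h).2]
    · intro r _ hr
      rw [tgtCount_replicate']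
      by_cases h : e r = 0
      · simp [h]
      · rw [if_neg]
        intro hcon
        exact hr ((hτ r h).2 ▸ hcon)
    · intro h
      exact absurd (Finset.mem_univ q) h
  have hsrcE0 : ∀ q, x.2 q = 0 → srcCount E q = 0 := by
    intro q hx
    rw [hE, srcCount_sum']
    apply Finset.sum_eq_zero
    intro r _
    rw [srcCount_replicate']
    by_cases h : e r = 0
    · simp [h]
    · rw [if_neg]
      intro hcon
      exact srcCount_ne_zero_of_mem (hτ r h).1 hcon (claimB q hx).1
  have hM' : Mb + Eb + (Mr + Er) = (Mb + Mr) + E := by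
    rw [add_add_add_comm, hEbEr]
  refine ⟨(x.1, fun q => (d'.2 q - (tgtCount (Mb + Mr) q + e q)) +
      srcCount (Mb + Mr) q + srcCount E q), ?_, ?_⟩
  · refine ⟨a, Mb + Eb, Mr + Er, ?_, ?_, ?_, ?_, ?_⟩
    · intro t ht
      rcases Multiset.mem_add.mp ht with h | h
      · exact hMb t h
      · exact hMb t (hEbsub t h)
    · intro t ht
      rcases Multiset.mem_add.mp ht with h | h
      · exact hMr t h
      · exact hMr t (hErsub t h)
    · rcases hbr with ⟨hC, hMb0⟩ | ⟨⟨p0, p0', j, hj, hp, hrep⟩, hctl⟩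
      · left
        have hEb0 : Eb = 0 := Multiset.eq_zero_of_forall_notMem fun t ht => by
          have := hEbsub t ht; rw [hMb0] at this; simp at this
        refine ⟨?_, by rw [hMb0, hEb0]; rfl⟩
        show (x.1, LBLab.br a, d'.1) ∈ ΔC
        rw [← hc]; exact hC
      · right
        have hall : ∀ b ∈ Mb + Eb, b = (p0, p0') := by
          intro b hb
          rcases Multiset.mem_add.mp hb with h | h
          · exact Multiset.eq_of_mem_replicate (hrep ▸ h)
          · exact Multiset.eq_of_mem_replicate (hrep ▸ hEbsub b h)
        refine ⟨⟨p0, p0', Multiset.card (Mb + Eb), ?_, hp,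
          Multiset.eq_replicate_card.mpr hall⟩, ?_⟩
        · have hcard : Multiset.card Mb = j := by rw [hrep, Multiset.card_replicate]
          rw [Multiset.card_add]
          omega
        · rcases hctl with h | h
          · left
            show (x.1, LBLab.rcv a, d'.1) ∈ ΔC
            rw [← hc]; exact h
          · right
            show d'.1 = x.1
            rw [← hc]; exact h
    · intro q
      show srcCount (Mb + Eb + (Mr + Er)) q ≤
        (d'.2 q - (tgtCount (Mb + Mr) q + e q)) +
          srcCount (Mb + Mr) q + srcCount E q
      rw [hM', srcCount_add']
      omega
    · intro q
      show d'.2 q = ((d'.2 q - (tgtCount (Mb + Mr) q + e q)) +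
          srcCount (Mb + Mr) q + srcCount E q) -
        srcCount (Mb + Eb + (Mr + Er)) q + tgtCount (Mb + Eb + (Mr + Er)) q
      have h1 := hs q
      have h2 := hst q
      have h3 := hle q
      simp only [hM', srcCount_add', tgtCount_add', htgtE] at h1 h2 ⊢
      by_cases hx : x.2 q = 0
      · have hcb := claimB q hx
        have hEq := he1 q hx
        have hsE := hsrcE0 q hx
        simp only [srcCount_add', tgtCount_add'] at hcb
        omega
      · have hEq := he0 q hx
        omega
  · have main : ∀ q, x.2 q ≤ (d'.2 q - (tgtCount (Mb + Mr) q + e q)) +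
        srcCount (Mb + Mr) q + srcCount E q ∧
        (x.2 q = 0 ↔ (d'.2 q - (tgtCount (Mb + Mr) q + e q)) +
          srcCount (Mb + Mr) q + srcCount E q = 0) := by
      intro q
      have h1 := hs q
      have h2 := hst q
      have h3 := hle q
      by_cases hx : x.2 q = 0
      · have hcb := claimB q hx
        have hEq := he1 q hx
        have hsE := hsrcE0 q hx
        omega
      · have hEq := he0 q hx
        omega
    exact ⟨rfl, fun q => (main q).1, fun q => (main q).2⟩

end Aux

/-- Every counter system whose steps are exactly the lossy
broadcast steps induced by a finite set of lossy broadcast transitions is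
fully `≼₀`-compatible. -/
theorem stmt3 [Fintype C] [Fintype Q] [Nonempty C] [Nonempty Q]
    [Fintype A] [DecidableEq Q]
    (ΔC : Set (C × LBLab A × C)) (ΔQ : Set (Q × LBLab A × Q))
    (T : Set (Conf C Q × Conf C Q))
    (hT : ∀ x y : Conf C Q, (x, y) ∈ T ↔ LBStep ΔC ΔQ x y) :
    FwdCompat T ∧ BwdCompat T := by
  constructor
  · intro x y d hxy hxd
    obtain ⟨d', h1, h2⟩ := fwd_lemma ΔC ΔQ ((hT x y).mp hxy) hxd
    exact ⟨d', (hT d d').mpr h1, h2⟩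
  · intro x y d' hxy hyd
    obtain ⟨d, h1, h2⟩ := bwd_lemma ΔC ΔQ ((hT x y).mp hxy) hyd
    exact ⟨d, (hT d d').mpr h1, h2⟩

end CS01
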